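/- arXiv:2311.15352 — 2 statements merged into one kernel-verified Lean document; each statement's English description precedes it below -/
import Mathlib

section
/- For every continuously differentiable function f : [0,1] → ℝ one has sup_{x∈[0,1]} |f(x)|² ≤ (tanh 1)⁻¹ · ( ∫₀¹ f(x)² dx + ∫₀¹ f'(x)² dx ). In other words, the Sobolev embedding W^{1,2}([0,1]) ↪ C([0,1]) holds with embedding constant tanh(1)^{-1/2}. -/
open MeasureTheory Set

private lemma tanh_hasDerivAt (x : ℝ) :
    HasDerivAt Real.tanh (1 / Real.cosh x ^ 2) x := by
  have h := (Real.hasDerivAt_sinh x).div (Real.hasDerivAt_cosh x) (Real.cosh_pos x).ne'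
  have hx : Real.tanh = fun x => Real.sinh x / Real.cosh x := by
    funext y; exact Real.tanh_eq_sinh_div_cosh y
  rw [hx]
  refine h.congr_deriv ?_
  have hc := (Real.cosh_pos x).ne'
  field_simp
  nlinarith [Real.cosh_sq_sub_sinh_sq x]

private lemma tanh_sq_add (x : ℝ) : Real.tanh x ^ 2 + 1 / Real.cosh x ^ 2 = 1 := by
  rw [Real.tanh_eq_sinh_div_cosh]
  have hc := (Real.cosh_pos x).ne'
  field_simp
  nlinarith [Real.cosh_sq_sub_sinh_sq x]

private lemma tanh_subadd {a b : ℝ} (ha : 0 ≤ a) (hb : 0 ≤ b) :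
    Real.tanh (a + b) ≤ Real.tanh a + Real.tanh b := by
  have sa := Real.sinh_nonneg_iff.2 ha
  have sb := Real.sinh_nonneg_iff.2 hb
  have ca := Real.cosh_pos a
  have cb := Real.cosh_pos b
  have cab := Real.cosh_pos (a + b)
  rw [Real.tanh_eq_sinh_div_cosh, Real.tanh_eq_sinh_div_cosh, Real.tanh_eq_sinh_div_cosh,
    Real.sinh_add, Real.cosh_add]
  rw [div_add_div _ _ ca.ne' cb.ne']
  exact div_le_div_of_nonneg_left
    (add_nonneg (mul_nonneg sa cb.le) (mul_nonneg ca.le sb))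
    (by positivity) (by nlinarith [mul_nonneg sa sb])

/-- FTC-type inequality on a subinterval of `[0,1]`. -/
private lemma ftc_le (g G' bound : ℝ → ℝ) {a b : ℝ} (hab : a ≤ b)
    (ha : 0 ≤ a) (hb : b ≤ 1)
    (hg : ∀ x ∈ Icc (0:ℝ) 1, HasDerivWithinAt g (G' x) (Icc 0 1) x)
    (hG' : ContinuousOn G' (Icc 0 1))
    (hbc : ContinuousOn bound (Icc 0 1))
    (hle : ∀ x ∈ Icc (0:ℝ) 1, G' x ≤ bound x) :
    g b - g a ≤ ∫ x in a..b, bound x := by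
  have hsub : Icc a b ⊆ Icc (0:ℝ) 1 := Icc_subset_Icc ha hb
  have hsub' : uIcc a b ⊆ Icc (0:ℝ) 1 := by rwa [uIcc_of_le hab]
  have hgc : ContinuousOn g (Icc a b) := fun x hx =>
    ((hg x (hsub hx)).continuousWithinAt).mono hsub
  have hderiv : ∀ x ∈ Ioo a b, HasDerivWithinAt g (G' x) (Ioi x) x := by
    intro x hx
    have hx1 : x ∈ Ioo (0:ℝ) 1 := ⟨lt_of_le_of_lt ha hx.1, lt_of_lt_of_le hx.2 hb⟩
    have : HasDerivAt g (G' x) x :=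
      (hg x (Ioo_subset_Icc_self hx1)).hasDerivAt (Icc_mem_nhds hx1.1 hx1.2)
    exact this.hasDerivWithinAt
  have hint : IntervalIntegrable G' volume a b :=
    (hG'.mono hsub').intervalIntegrable
  have heq : ∫ x in a..b, G' x = g b - g a :=
    intervalIntegral.integral_eq_sub_of_hasDeriv_right_of_le hab hgc hderiv hint
  rw [← heq]
  exact intervalIntegral.integral_mono_on hab hint (hbc.mono hsub').intervalIntegrable
    (fun x hx => hle x (hsub hx))

/-- Sobolev embedding `W^{1,2}([0,1]) ↪ C([0,1])` with Marti's optimal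
constant `tanh(1)^{-1/2}`: for every continuously differentiable `f : [0,1] → ℝ`,
`sup_{x∈[0,1]} |f(x)|² ≤ (tanh 1)⁻¹ (∫₀¹ f² + ∫₀¹ f'²)`. -/
theorem stmt_1 (f f' : ℝ → ℝ)
    (hf : ∀ x ∈ Set.Icc (0:ℝ) 1, HasDerivWithinAt f (f' x) (Set.Icc 0 1) x)
    (hf' : ContinuousOn f' (Set.Icc 0 1)) :
    (⨆ x ∈ Set.Icc (0:ℝ) 1, |f x| ^ 2)
      ≤ (Real.tanh 1)⁻¹ *
        ((∫ x in Set.Icc (0:ℝ) 1, f x ^ 2) + ∫ x in Set.Icc (0:ℝ) 1, f' x ^ 2) := by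
  have hfc : ContinuousOn f (Icc (0:ℝ) 1) := fun x hx => (hf x hx).continuousWithinAt
  set bound : ℝ → ℝ := fun x => f x ^ 2 + f' x ^ 2 with hbound
  have hbc : ContinuousOn bound (Icc (0:ℝ) 1) := (hfc.pow 2).add (hf'.pow 2)
  have htanh1 : 0 < Real.tanh 1 := by
    rw [Real.tanh_eq_sinh_div_cosh]
    exact div_pos (Real.sinh_pos_iff.2 one_pos) (Real.cosh_pos 1)
  -- g1 = f² · tanh, g2 = -(f² · tanh(1-·))
  set g1 : ℝ → ℝ := fun x => f x ^ 2 * Real.tanh x with hg1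
  set g2 : ℝ → ℝ := fun x => -(f x ^ 2 * Real.tanh (1 - x)) with hg2
  set G1 : ℝ → ℝ := fun x => 2 * f x * f' x * Real.tanh x + f x ^ 2 * (1 / Real.cosh x ^ 2)
    with hG1
  set G2 : ℝ → ℝ := fun x =>
    -(2 * f x * f' x * Real.tanh (1 - x)) + f x ^ 2 * (1 / Real.cosh (1 - x) ^ 2) with hG2
  have hg1d : ∀ x ∈ Icc (0:ℝ) 1, HasDerivWithinAt g1 (G1 x) (Icc 0 1) x := by
    intro x hx
    have h := ((hf x hx).pow 2).mul (tanh_hasDerivAt x).hasDerivWithinAt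
    refine h.congr_deriv ?_
    simp only [hG1, Pi.pow_apply]
    ring
  have hg2d : ∀ x ∈ Icc (0:ℝ) 1, HasDerivWithinAt g2 (G2 x) (Icc 0 1) x := by
    intro x hx
    have ht : HasDerivAt (fun y => Real.tanh (1 - y))
        (-(1 / Real.cosh (1 - x) ^ 2)) x := by
      have := (tanh_hasDerivAt (1 - x)).comp x ((hasDerivAt_id x).const_sub 1)
      exact this.congr_deriv (by ring)
    have h := (((hf x hx).pow 2).mul ht.hasDerivWithinAt).neg
    refine h.congr_deriv ?_
    simp only [hG2, Pi.pow_apply]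
    ring
  have htanh_cont : Continuous Real.tanh := by
    have : Real.tanh = fun x => Real.sinh x / Real.cosh x := by
      funext y; exact Real.tanh_eq_sinh_div_cosh y
    rw [this]
    exact Real.continuous_sinh.div Real.continuous_cosh fun x => (Real.cosh_pos x).ne'
  have hG1c : ContinuousOn G1 (Icc (0:ℝ) 1) := by
    apply ContinuousOn.add
    · exact (((continuousOn_const.mul hfc).mul hf').mul htanh_cont.continuousOn)
    · exact (hfc.pow 2).mul (continuousOn_const.div
        ((Real.continuous_cosh.comp continuous_id).continuousOn.pow 2)
        fun x _ => by positivity)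
  have hG2c : ContinuousOn G2 (Icc (0:ℝ) 1) := by
    apply ContinuousOn.add
    · exact (((continuousOn_const.mul hfc).mul hf').mul
        ((htanh_cont.comp (continuous_const.sub continuous_id)).continuousOn)).neg
    · exact (hfc.pow 2).mul (continuousOn_const.div
        (((Real.continuous_cosh.comp (continuous_const.sub continuous_id)).continuousOn).pow 2)
        fun x _ => by positivity)
  have hle1 : ∀ x ∈ Icc (0:ℝ) 1, G1 x ≤ bound x := by
    intro x _
    have h1 := tanh_sq_add x
    simp only [hG1, hbound]
    nlinarith [sq_nonneg (f x * Real.tanh x - f' x), sq_nonneg (f x),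
      one_div_nonneg.2 (sq_nonneg (Real.cosh x))]
  have hle2 : ∀ x ∈ Icc (0:ℝ) 1, G2 x ≤ bound x := by
    intro x _
    have h1 := tanh_sq_add (1 - x)
    simp only [hG2, hbound]
    nlinarith [sq_nonneg (f x * Real.tanh (1 - x) + f' x), sq_nonneg (f x),
      one_div_nonneg.2 (sq_nonneg (Real.cosh (1 - x)))]
  -- main pointwise bound
  have key : ∀ x₀ ∈ Icc (0:ℝ) 1, f x₀ ^ 2 * Real.tanh 1 ≤ ∫ x in (0:ℝ)..1, bound x := by
    intro x₀ hx₀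
    have h1 : g1 x₀ - g1 0 ≤ ∫ x in (0:ℝ)..x₀, bound x :=
      ftc_le g1 G1 bound hx₀.1 le_rfl hx₀.2 hg1d hG1c hbc hle1
    have h2 : g2 1 - g2 x₀ ≤ ∫ x in x₀..(1:ℝ), bound x :=
      ftc_le g2 G2 bound hx₀.2 hx₀.1 le_rfl hg2d hG2c hbc hle2
    have hadd : (∫ x in (0:ℝ)..x₀, bound x) + ∫ x in x₀..(1:ℝ), bound x
        = ∫ x in (0:ℝ)..1, bound x := by
      apply intervalIntegral.integral_add_adjacent_intervals
      · exact (hbc.mono (by rw [uIcc_of_le hx₀.1]; exact Icc_subset_Icc le_rfl hx₀.2)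
          ).intervalIntegrable
      · exact (hbc.mono (by rw [uIcc_of_le hx₀.2]; exact Icc_subset_Icc hx₀.1 le_rfl)
          ).intervalIntegrable
    have hsum : f x₀ ^ 2 * (Real.tanh x₀ + Real.tanh (1 - x₀)) ≤ ∫ x in (0:ℝ)..1, bound x := by
      have : g1 x₀ - g1 0 + (g2 1 - g2 x₀)
          = f x₀ ^ 2 * (Real.tanh x₀ + Real.tanh (1 - x₀)) := by
        simp [hg1, hg2, Real.tanh_zero]; ring
      rw [← hadd, ← this]
      exact add_le_add h1 h2
    have hsub : Real.tanh 1 ≤ Real.tanh x₀ + Real.tanh (1 - x₀) := by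
      have := tanh_subadd hx₀.1 (by linarith [hx₀.2] : (0:ℝ) ≤ 1 - x₀)
      simpa using this
    calc f x₀ ^ 2 * Real.tanh 1 ≤ f x₀ ^ 2 * (Real.tanh x₀ + Real.tanh (1 - x₀)) :=
          mul_le_mul_of_nonneg_left hsub (sq_nonneg _)
      _ ≤ _ := hsum
  -- rewrite RHS
  have hintf : IntervalIntegrable (fun x => f x ^ 2) volume 0 1 :=
    ((hfc.pow 2).mono (by rw [uIcc_of_le zero_le_one])).intervalIntegrable
  have hintf' : IntervalIntegrable (fun x => f' x ^ 2) volume 0 1 :=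
    ((hf'.pow 2).mono (by rw [uIcc_of_le zero_le_one])).intervalIntegrable
  have hrhs : (∫ x in Set.Icc (0:ℝ) 1, f x ^ 2) + ∫ x in Set.Icc (0:ℝ) 1, f' x ^ 2
      = ∫ x in (0:ℝ)..1, bound x := by
    rw [intervalIntegral.integral_add hintf hintf',
      intervalIntegral.integral_of_le zero_le_one,
      intervalIntegral.integral_of_le zero_le_one,
      integral_Icc_eq_integral_Ioc, integral_Icc_eq_integral_Ioc]
  have hK_nonneg : 0 ≤ ∫ x in (0:ℝ)..1, bound x := by
    apply intervalIntegral.integral_nonneg zero_le_one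
    intro x _; positivity
  have hRHS_nonneg : 0 ≤ (Real.tanh 1)⁻¹ *
      ((∫ x in Set.Icc (0:ℝ) 1, f x ^ 2) + ∫ x in Set.Icc (0:ℝ) 1, f' x ^ 2) := by
    rw [hrhs]; positivity
  apply Real.iSup_le _ hRHS_nonneg
  intro x
  apply Real.iSup_le _ hRHS_nonneg
  intro hx
  rw [sq_abs, hrhs, inv_mul_eq_div, le_div_iff₀ htanh1]
  exact key x hx
end

section
/- The improper integral ∫₀^∞ ( 1 − (2/π)·arctan(y³) ) dy converges and equals 2/√3. -/
open MeasureTheory Real Filter Topology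

noncomputable def F12 : ℝ → ℝ := fun y =>
  y - 2 / π * (y * arctan (y ^ 3)) +
    2 / π * ((1 / 4) * (Real.log (y ^ 4 - y ^ 2 + 1) - 2 * Real.log (y ^ 2 + 1)) +
      (Real.sqrt 3 / 2) * arctan ((2 * y ^ 2 - 1) / Real.sqrt 3))

lemma quartic_pos (y : ℝ) : 0 < y ^ 4 - y ^ 2 + 1 := by nlinarith [sq_nonneg (y ^ 2 - 1), sq_nonneg y]

lemma sqrt3_pos : (0:ℝ) < Real.sqrt 3 := Real.sqrt_pos.2 (by norm_num)

lemma sqrt3_sq : Real.sqrt 3 * Real.sqrt 3 = 3 := Real.mul_self_sqrt (by norm_num)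

lemma hasDerivAt_F12 (y : ℝ) : HasDerivAt F12 (1 - 2 / π * arctan (y ^ 3)) y := by
  have hq := quartic_pos y
  have hy2 : (0:ℝ) < y ^ 2 + 1 := by positivity
  have hy6 : (0:ℝ) < 1 + (y ^ 3) ^ 2 := by positivity
  -- derivative of arctan (y^3)
  have h1 : HasDerivAt (fun y : ℝ => arctan (y ^ 3))
      (1 / (1 + (y ^ 3) ^ 2) * (3 * y ^ 2)) y :=
    by have := (Real.hasDerivAt_arctan (y ^ 3)).comp y (hasDerivAt_pow 3 y |>.congr_deriv (by ring : _ = 3 * y ^ 2)); exact this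
  -- derivative of y * arctan(y^3)
  have h2 : HasDerivAt (fun y : ℝ => y * arctan (y ^ 3))
      (1 * arctan (y ^ 3) + y * (1 / (1 + (y ^ 3) ^ 2) * (3 * y ^ 2))) y :=
    (hasDerivAt_id y).mul h1
  -- derivative of log (y^4 - y^2 + 1)
  have h3 : HasDerivAt (fun y : ℝ => Real.log (y ^ 4 - y ^ 2 + 1))
      ((4 * y ^ 3 - 2 * y) / (y ^ 4 - y ^ 2 + 1)) y := by
    have hp : HasDerivAt (fun y : ℝ => y ^ 4 - y ^ 2 + 1) (4 * y ^ 3 - 2 * y) y := by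
      have := ((hasDerivAt_pow 4 y).sub (hasDerivAt_pow 2 y)).add_const 1
      refine this.congr_deriv ?_; push_cast; ring
    exact hp.log hq.ne'
  -- derivative of log (y^2 + 1)
  have h4 : HasDerivAt (fun y : ℝ => Real.log (y ^ 2 + 1)) (2 * y / (y ^ 2 + 1)) y := by
    have hp : HasDerivAt (fun y : ℝ => y ^ 2 + 1) (2 * y) y := by
      have := (hasDerivAt_pow 2 y).add_const 1
      refine this.congr_deriv ?_; push_cast; ring
    exact hp.log hy2.ne'
  -- derivative of arctan ((2y^2-1)/√3), simplified form
  have h5 : HasDerivAt (fun y : ℝ => arctan ((2 * y ^ 2 - 1) / Real.sqrt 3))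
      ((3 / 2) * (2 * y) / (y ^ 4 - y ^ 2 + 1) / Real.sqrt 3) y := by
    have hp : HasDerivAt (fun y : ℝ => (2 * y ^ 2 - 1) / Real.sqrt 3)
        (2 * (2 * y) / Real.sqrt 3) y := by
      have : HasDerivAt (fun y : ℝ => 2 * y ^ 2 - 1) (2 * (2 * y)) y := by
        have := ((hasDerivAt_pow 2 y).const_mul 2).sub_const 1
        refine this.congr_deriv ?_; push_cast; ring
      exact this.div_const _
    have := (Real.hasDerivAt_arctan ((2 * y ^ 2 - 1) / Real.sqrt 3)).comp y hp
    refine this.congr_deriv ?_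
    have hs := sqrt3_sq
    have hsne : Real.sqrt 3 ≠ 0 := sqrt3_pos.ne'
    have hd : (0:ℝ) < 1 + ((2 * y ^ 2 - 1) / Real.sqrt 3) ^ 2 := by positivity
    have hq' := hq.ne'
    generalize hQ : y ^ 4 - y ^ 2 + 1 = Q at hq' ⊢
    field_simp
    subst hQ
    rw [Real.sq_sqrt (by norm_num : (0:ℝ) ≤ 3)]
    nlinarith [sq_nonneg y, sq_nonneg (y^2-1)]
  -- assemble
  have hmain :
      HasDerivAt F12
        (1 - 2 / π * (1 * arctan (y ^ 3) + y * (1 / (1 + (y ^ 3) ^ 2) * (3 * y ^ 2))) +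
          2 / π * ((1 / 4) * ((4 * y ^ 3 - 2 * y) / (y ^ 4 - y ^ 2 + 1) - 2 * (2 * y / (y ^ 2 + 1))) +
            (Real.sqrt 3 / 2) * ((3 / 2) * (2 * y) / (y ^ 4 - y ^ 2 + 1) / Real.sqrt 3))) y := by
    exact (((hasDerivAt_id y).congr_deriv rfl).sub (h2.const_mul (2 / π))).add
      ((((h3.sub (h4.const_mul 2)).const_mul (1 / 4)).add
        (h5.const_mul (Real.sqrt 3 / 2))).const_mul (2 / π))
  convert hmain using 1
  have hπ : (0:ℝ) < π := Real.pi_pos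
  have hsne : Real.sqrt 3 ≠ 0 := sqrt3_pos.ne'
  have hy6' : (1:ℝ) + y ^ 6 ≠ 0 := by positivity
  have hq' : y ^ 4 - y ^ 2 + 1 ≠ 0 := hq.ne'
  rw [show (1:ℝ) + (y ^ 3) ^ 2 = (y ^ 2 + 1) * (y ^ 4 - y ^ 2 + 1) by ring]
  generalize hQ : y ^ 4 - y ^ 2 + 1 = Q at hq' ⊢
  field_simp
  subst hQ
  ring_nf

lemma tendsto_F12 : Tendsto F12 atTop (𝓝 (Real.sqrt 3 / 2)) := by
  have hπ : (0:ℝ) < π := Real.pi_pos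
  -- Part A : y - 2/π * (y * arctan y³) → 0
  have hA : Tendsto (fun y : ℝ => y - 2 / π * (y * arctan (y ^ 3))) atTop (𝓝 0) := by
    have hb : Tendsto (fun y : ℝ => 2 / π * (1 / y ^ 2)) atTop (𝓝 0) := by
      have : Tendsto (fun y : ℝ => 1 / y ^ 2) atTop (𝓝 0) :=
        Tendsto.div_atTop tendsto_const_nhds (tendsto_pow_atTop (by norm_num))
      simpa using this.const_mul (2 / π)
    refine squeeze_zero' ?_ ?_ hb
    · filter_upwards [eventually_gt_atTop (0:ℝ)] with y hy
      have h1 : arctan (y ^ 3) < π / 2 := arctan_lt_pi_div_two _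
      have : y * arctan (y ^ 3) ≤ y * (π / 2) := by
        apply mul_le_mul_of_nonneg_left h1.le hy.le
      have h2 : 2 / π * (y * arctan (y ^ 3)) ≤ 2 / π * (y * (π / 2)) := by
        apply mul_le_mul_of_nonneg_left this (by positivity)
      have h3 : 2 / π * (y * (π / 2)) = y := by field_simp
      linarith
    · filter_upwards [eventually_gt_atTop (1:ℝ)] with y hy
      have hy0 : 0 < y := by linarith
      have hy3 : (0:ℝ) < y ^ 3 := by positivity
      have key : π / 2 - arctan (y ^ 3) = arctan ((y ^ 3)⁻¹) := (arctan_inv_of_pos hy3).symm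
      have hbound : arctan ((y ^ 3)⁻¹) ≤ (y ^ 3)⁻¹ := by
        have h0 : 0 ≤ arctan ((y ^ 3)⁻¹) := by
          rw [← Real.arctan_zero]
          exact Real.arctan_strictMono.monotone (by positivity)
        calc arctan ((y ^ 3)⁻¹) ≤ tan (arctan ((y ^ 3)⁻¹)) :=
              Real.le_tan h0 (arctan_lt_pi_div_two _)
          _ = (y ^ 3)⁻¹ := tan_arctan _
      have heq : y - 2 / π * (y * arctan (y ^ 3)) = 2 / π * (y * (π / 2 - arctan (y ^ 3))) := by
        field_simp
      rw [heq, key]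
      have : y * arctan ((y ^ 3)⁻¹) ≤ y * (y ^ 3)⁻¹ :=
        mul_le_mul_of_nonneg_left hbound hy0.le
      have h4 : y * (y ^ 3)⁻¹ = 1 / y ^ 2 := by field_simp
      have : 2 / π * (y * arctan ((y ^ 3)⁻¹)) ≤ 2 / π * (1 / y ^ 2) := by
        rw [← h4]; exact mul_le_mul_of_nonneg_left this (by positivity)
      linarith
  -- Part B1 : log term → 0
  have hB1 : Tendsto (fun y : ℝ => Real.log (y ^ 4 - y ^ 2 + 1) - 2 * Real.log (y ^ 2 + 1))
      atTop (𝓝 0) := by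
    have hr : Tendsto (fun y : ℝ => (y ^ 4 - y ^ 2 + 1) / (y ^ 2 + 1) ^ 2) atTop (𝓝 1) := by
      have h0 : Tendsto (fun y : ℝ => 3 * y ^ 2 / (y ^ 2 + 1) ^ 2) atTop (𝓝 0) := by
        have hb : Tendsto (fun y : ℝ => 3 / y ^ 2) atTop (𝓝 0) :=
          Tendsto.div_atTop tendsto_const_nhds (tendsto_pow_atTop (by norm_num))
        refine squeeze_zero' ?_ ?_ hb
        · filter_upwards [eventually_gt_atTop (0:ℝ)] with y hy; positivity
        · filter_upwards [eventually_gt_atTop (1:ℝ)] with y hy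
          have hy2 : (0:ℝ) < y ^ 2 := by positivity
          rw [div_le_div_iff₀ (by positivity) (by positivity)]
          nlinarith [sq_nonneg y]
      have heq : ∀ᶠ y : ℝ in atTop, 1 - 3 * y ^ 2 / (y ^ 2 + 1) ^ 2 =
          (y ^ 4 - y ^ 2 + 1) / (y ^ 2 + 1) ^ 2 := by
        filter_upwards [eventually_gt_atTop (0:ℝ)] with y hy
        have : (0:ℝ) < (y ^ 2 + 1) ^ 2 := by positivity
        field_simp; ring
      have := (tendsto_const_nhds (x := (1:ℝ)) (f := atTop)).sub h0
      rw [sub_zero] at this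
      exact this.congr' heq
    have hlog : Tendsto (fun y : ℝ => Real.log ((y ^ 4 - y ^ 2 + 1) / (y ^ 2 + 1) ^ 2))
        atTop (𝓝 0) := by
      have := (Real.continuousAt_log (by norm_num : (1:ℝ) ≠ 0)).tendsto.comp hr
      simpa [Function.comp_def] using this
    refine hlog.congr' ?_
    filter_upwards [eventually_gt_atTop (0:ℝ)] with y hy
    have hq := quartic_pos y
    have hy2 : (0:ℝ) < y ^ 2 + 1 := by positivity
    rw [Real.log_div hq.ne' (by positivity), Real.log_pow]
    push_cast; ring
  -- Part B2 : arctan term → π/2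
  have hB2 : Tendsto (fun y : ℝ => arctan ((2 * y ^ 2 - 1) / Real.sqrt 3)) atTop (𝓝 (π / 2)) := by
    have hin : Tendsto (fun y : ℝ => (2 * y ^ 2 - 1) / Real.sqrt 3) atTop atTop := by
      apply Tendsto.atTop_div_const sqrt3_pos
      have h1 : Tendsto (fun y : ℝ => 2 * y ^ 2) atTop atTop :=
        (tendsto_pow_atTop (by norm_num)).const_mul_atTop (by norm_num)
      simpa [sub_eq_add_neg] using tendsto_atTop_add_const_right atTop (-1 : ℝ) h1
    exact (Real.tendsto_arctan_atTop.mono_right nhdsWithin_le_nhds).comp hin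
  have := hA.add (((hB1.const_mul (1/4 : ℝ)).add (hB2.const_mul (Real.sqrt 3 / 2))).const_mul (2 / π))
  have hval : (0:ℝ) + 2 / π * ((1/4 : ℝ) * 0 + Real.sqrt 3 / 2 * (π / 2)) = Real.sqrt 3 / 2 := by
    field_simp
    ring
  rw [hval] at this
  exact this.congr (fun y => by simp only [F12])

lemma F12_zero : F12 0 = -(Real.sqrt 3 / 6) := by
  have h6 : arctan ((2 * (0:ℝ) ^ 2 - 1) / Real.sqrt 3) = -(π / 6) := by
    have h1 : arctan (1 / Real.sqrt 3) = π / 6 := by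
      rw [← Real.tan_pi_div_six]
      exact Real.arctan_tan (by linarith [Real.pi_pos]) (by linarith [Real.pi_pos])
    have : ((2 * (0:ℝ) ^ 2 - 1) / Real.sqrt 3) = -(1 / Real.sqrt 3) := by ring
    rw [this, arctan_neg, h1]
  simp only [F12]
  rw [h6]
  norm_num
  field_simp

/-- The improper integral `∫₀^∞ (1 − (2/π) arctan(y³)) dy` converges
(the integrand is Lebesgue integrable on `[0,∞)`) and equals `2/√3`. -/
theorem stmt_12 :
    IntegrableOn (fun y : ℝ => 1 - 2 / Real.pi * Real.arctan (y ^ 3)) (Set.Ici 0) ∧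
    ∫ y in Set.Ici (0:ℝ), (1 - 2 / Real.pi * Real.arctan (y ^ 3)) = 2 / Real.sqrt 3 := by
  have hπ : (0:ℝ) < π := Real.pi_pos
  have hderiv : ∀ x ∈ Set.Ici (0:ℝ), HasDerivAt F12 (1 - 2 / π * arctan (x ^ 3)) x :=
    fun x _ => hasDerivAt_F12 x
  have hpos : ∀ x ∈ Set.Ioi (0:ℝ), 0 ≤ 1 - 2 / π * arctan (x ^ 3) := by
    intro x hx
    have h1 : arctan (x ^ 3) < π / 2 := arctan_lt_pi_div_two _
    have h2 : 2 / π * arctan (x ^ 3) ≤ 2 / π * (π / 2) :=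
      mul_le_mul_of_nonneg_left h1.le (by positivity)
    have h3 : 2 / π * (π / 2) = 1 := by field_simp
    linarith
  have hint : IntegrableOn (fun y : ℝ => 1 - 2 / π * arctan (y ^ 3)) (Set.Ioi 0) :=
    integrableOn_Ioi_deriv_of_nonneg' hderiv hpos tendsto_F12
  have hval : ∫ x in Set.Ioi (0:ℝ), (1 - 2 / π * arctan (x ^ 3)) =
      Real.sqrt 3 / 2 - F12 0 :=
    integral_Ioi_of_hasDerivAt_of_nonneg' hderiv hpos tendsto_F12
  constructor
  · rw [integrableOn_Ici_iff_integrableOn_Ioi]; exact hint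
  · rw [integral_Ici_eq_integral_Ioi, hval, F12_zero]
    have hs := sqrt3_sq
    have hsne : Real.sqrt 3 ≠ 0 := sqrt3_pos.ne'
    field_simp
    linarith
end
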